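/- Let A = (a_{ij}) be an n×n positive semidefinite complex matrix of rank k, and let e : {1,…,k} → {1,…,n} be a strictly increasing (or just injective) choice of k indices such that the k×k submatrix (a_{e(r) e(s)})_{r,s} is invertible, with inverse (a^{rs}). Then A is completely determined by its rows with indices in the range of e; explicitly, for all i, j ∈ {1,…,n}: a_{ij} = Σ_{r,s=1}^{k} a_{i e(r)} · a^{rs} · conj(a_{j e(s)}). -/

import Mathlib

open scoped ComplexOrder Matrix

/-- A positive semidefinite `n×n` matrix `A` of rank `k` with an invertible principal
`k×k` submatrix (rows/columns selected by the injective map `e`) is completely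
determined by the selected rows:
`a_{ij} = Σ_{r,s} a_{i e(r)} · (a^{rs}) · conj(a_{j e(s)})`. -/
theorem posSemidef_reconstruction {n k : ℕ} (A : Matrix (Fin n) (Fin n) ℂ)
    (hA : A.PosSemidef) (hrank : A.rank = k)
    (e : Fin k → Fin n) (he : Function.Injective e)
    (hinv : IsUnit (A.submatrix e e).det) :
    ∀ i j, A i j = ∑ r, ∑ s, A i (e r) * (A.submatrix e e)⁻¹ r s * star (A j (e s)) := by
  obtain ⟨B, hB⟩ : ∃ B : Matrix (Fin n) (Fin n) ℂ, A = Bᴴ * B := by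
    open scoped MatrixOrder Matrix.Norms.L2Operator in
    obtain ⟨B, hB⟩ := CStarAlgebra.nonneg_iff_eq_star_mul_self.mp hA.nonneg
    exact ⟨B, hB⟩
  subst hB
  set P : Matrix (Fin n) (Fin k) ℂ := B.submatrix id e with hPdef
  have hS : (Bᴴ * B).submatrix e e = Pᴴ * P := by
    ext r s
    simp [Matrix.mul_apply, hPdef, Matrix.conjTranspose_apply]
  -- rank facts
  have hrankB : B.rank = k := by
    rw [← Matrix.rank_conjTranspose_mul_self]; exact hrank
  have hrankP : P.rank = k := by
    rw [← Matrix.rank_conjTranspose_mul_self, ← hS,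
      Matrix.rank_of_isUnit _ ((Matrix.isUnit_iff_isUnit_det _).mpr hinv)]
    simp
  -- column space of P equals column space of B
  have hle : LinearMap.range P.mulVecLin ≤ LinearMap.range B.mulVecLin := by
    rw [Matrix.range_mulVecLin, Matrix.range_mulVecLin]
    apply Submodule.span_mono
    rintro _ ⟨r, rfl⟩
    exact ⟨e r, by ext j; simp [hPdef]⟩
  have heq : LinearMap.range P.mulVecLin = LinearMap.range B.mulVecLin := by
    apply Submodule.eq_of_le_of_finrank_le hle
    show Matrix.rank B ≤ Matrix.rank P
    rw [hrankB, hrankP]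
  -- B = P * X
  have hcol : ∀ j, ∃ x : Fin k → ℂ, P *ᵥ x = fun i => B i j := by
    intro j
    have hmem : (fun i => B i j) ∈ LinearMap.range B.mulVecLin := by
      refine ⟨Pi.single j 1, ?_⟩
      ext i
      simp [Matrix.mulVecLin, Matrix.mulVec_single]
    rw [← heq] at hmem
    exact hmem
  choose x hx using hcol
  have hBX : B = P * Matrix.of (fun r j => x j r) := by
    ext i j
    have := congrFun (hx j) i
    simp only [Matrix.mulVec, dotProduct] at this
    simpa [Matrix.mul_apply] using this.symm
  set X : Matrix (Fin k) (Fin n) ℂ := Matrix.of (fun r j => x j r) with hXdef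
  -- key matrix identity
  have hC : (Bᴴ * B).submatrix id e = Bᴴ * P := by
    ext i r
    simp [Matrix.mul_apply, hPdef]
  have hR : (Bᴴ * B).submatrix e id = Pᴴ * B := by
    ext r j
    simp [Matrix.mul_apply, hPdef, Matrix.conjTranspose_apply]
  have hinv' : IsUnit (Pᴴ * P).det := by rw [← hS]; exact hinv
  have hunit : (Pᴴ * P) * (Pᴴ * P)⁻¹ = 1 := Matrix.mul_nonsing_inv _ hinv'
  have key : Bᴴ * B =
      ((Bᴴ * B).submatrix id e) * ((Bᴴ * B).submatrix e e)⁻¹ * ((Bᴴ * B).submatrix e id) := by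
    rw [hC, hR, hS]
    conv_lhs => rw [hBX]
    conv_rhs => rw [hBX]
    rw [Matrix.conjTranspose_mul]
    calc (Xᴴ * Pᴴ) * (P * X) = Xᴴ * (Pᴴ * P) * X := by
          rw [Matrix.mul_assoc, Matrix.mul_assoc, Matrix.mul_assoc]
      _ = Xᴴ * ((Pᴴ * P) * (Pᴴ * P)⁻¹ * (Pᴴ * P)) * X := by
          rw [hunit, Matrix.one_mul]
      _ = Xᴴ * Pᴴ * P * (Pᴴ * P)⁻¹ * (Pᴴ * (P * X)) := by
          simp only [Matrix.mul_assoc]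
  -- conclude entrywise
  intro i j
  have herm := hA.1
  have hstar : ∀ s, star ((Bᴴ * B) j (e s)) = (Bᴴ * B) (e s) j := by
    intro s
    conv_rhs => rw [← herm]
    simp [Matrix.conjTranspose_apply]
  have hkey := congrFun (congrFun key i) j
  have gen : ∀ (M : Matrix (Fin n) (Fin k) ℂ) (N : Matrix (Fin k) (Fin k) ℂ)
      (Q : Matrix (Fin k) (Fin n) ℂ), (M * N * Q) i j = ∑ r, ∑ s, M i r * N r s * Q s j := by
    intro M N Q
    simp only [Matrix.mul_apply, Finset.sum_mul]
    rw [Finset.sum_comm]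
  rw [hkey, gen]
  refine Finset.sum_congr rfl fun r _ => Finset.sum_congr rfl fun s _ => ?_
  rw [hstar]
  simp [Matrix.submatrix_apply]
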